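/- Let G be a finite simple graph in which every vertex has degree exactly 2, let {u1,v1} and {u2,v2} be edges of G with u1, v1, u2, v2 pairwise distinct and with neither {u1,u2} nor {v1,v2} an edge of G, and let G' be the result of the two-switch on these edges. If u1 and u2 lie in different connected components of G, then every vertex of G' has degree exactly 2, and any two vertices that each lie in the connected component of u1 or of u2 in G lie in one and the same connected component of G'. -/

import Mathlib

open SimpleGraph Finset
open scoped Classical

/-- The result of the two-switch on the edges `{u1,v1}` and `{u2,v2}` of `G`:
these two edges are deleted and the edges `{u1,u2}` and `{v1,v2}` are inserted. -/
def twoSwitch {V : Type*} (G : SimpleGraph V) (u1 v1 u2 v2 : V) : SimpleGraph V :=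
  SimpleGraph.fromEdgeSet ((G.edgeSet \ {s(u1, v1), s(u2, v2)}) ∪ {s(u1, u2), s(v1, v2)})

/-- Parity: an odd-degree vertex has another odd-degree vertex in its component. -/
lemma parity_lemma {V : Type*} [Fintype V] (H : SimpleGraph V) (a : V)
    (ha : Odd (H.degree a)) : ∃ b, b ≠ a ∧ H.Reachable a b ∧ Odd (H.degree b) := by
  classical
  let H' : SimpleGraph V :=
    { Adj := fun x y => H.Adj x y ∧ H.Reachable a x
      symm := ⟨by
        intro x y ⟨hxy, hax⟩
        exact ⟨hxy.symm, hax.trans hxy.reachable⟩⟩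
      loopless := ⟨fun x h => H.loopless.irrefl x h.1⟩ }
  have hnbr : ∀ x, H.Reachable a x → H'.neighborFinset x = H.neighborFinset x := by
    intro x hx
    ext b
    simp only [mem_neighborFinset]
    exact ⟨fun h => h.1, fun h => ⟨h, hx⟩⟩
  have hnbr0 : ∀ x, ¬ H.Reachable a x → H'.neighborFinset x = ∅ := by
    intro x hx
    ext b
    simp only [mem_neighborFinset, Finset.notMem_empty, iff_false]
    exact fun h => hx h.2
  have hdeg : ∀ x, H.Reachable a x → H'.degree x = H.degree x := by
    intro x hx
    simp only [← card_neighborFinset_eq_degree, hnbr x hx]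
  have heven := H'.even_card_odd_degree_vertices
  have hamem : a ∈ Finset.univ.filter (fun v => Odd (H'.degree v)) := by
    simp only [Finset.mem_filter, Finset.mem_univ, true_and]
    rwa [hdeg a (Reachable.refl a)]
  have hcard : 1 < (Finset.univ.filter (fun v => Odd (H'.degree v))).card := by
    rcases heven with ⟨k, hk⟩
    have h1 : 0 < (Finset.univ.filter (fun v => Odd (H'.degree v))).card :=
      Finset.card_pos.mpr ⟨a, hamem⟩
    omega
  obtain ⟨b, hb, hba⟩ := Finset.exists_mem_ne hcard a
  simp only [Finset.mem_filter, Finset.mem_univ, true_and] at hb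
  have hreach : H.Reachable a b := by
    by_contra hr
    rw [← card_neighborFinset_eq_degree, hnbr0 b hr] at hb
    simp at hb
  refine ⟨b, hba, hreach, ?_⟩
  rwa [hdeg b hreach] at hb

section Aux
variable {V : Type*} [Fintype V] (G : SimpleGraph V) (u1 v1 u2 v2 : V)

lemma delK_nbr_u1 (hd13 : u1 ≠ u2) (hd14 : u1 ≠ v2) :
    (G.deleteEdges {s(u1,v1), s(u2,v2)}).neighborFinset u1 = (G.neighborFinset u1).erase v1 := by
  ext b
  have hb1 : G.Adj u1 b → u1 ≠ b := fun h => G.ne_of_adj h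
  simp only [mem_neighborFinset, deleteEdges_adj, Set.mem_insert_iff, Set.mem_singleton_iff,
    Sym2.eq_iff, Finset.mem_erase]
  constructor
  · tauto
  · rintro ⟨hb, hadj⟩; have := hb1 hadj; constructor <;> tauto

lemma delK_nbr_other (v : V) (h1 : v ≠ u1) (h2 : v ≠ v1) (h3 : v ≠ u2) (h4 : v ≠ v2) :
    (G.deleteEdges {s(u1,v1), s(u2,v2)}).neighborFinset v = G.neighborFinset v := by
  ext b
  simp only [mem_neighborFinset, deleteEdges_adj, Set.mem_insert_iff, Set.mem_singleton_iff,
    Sym2.eq_iff]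
  constructor
  · tauto
  · intro hadj; constructor <;> tauto

lemma ts_nbr_u1 (hd12 : u1 ≠ v1) (hd13 : u1 ≠ u2) (hd14 : u1 ≠ v2) (hnu : ¬ G.Adj u1 u2) :
    (twoSwitch G u1 v1 u2 v2).neighborFinset u1 = insert u2 ((G.neighborFinset u1).erase v1) := by
  ext b
  have hb1 : G.Adj u1 b → u1 ≠ b := fun h => G.ne_of_adj h
  simp only [mem_neighborFinset]
  simp only [mem_neighborFinset, twoSwitch, fromEdgeSet_adj, Set.mem_union, Set.mem_diff,
    Set.mem_insert_iff, Set.mem_singleton_iff, mem_edgeSet, Sym2.eq_iff, Finset.mem_insert,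
    Finset.mem_erase]
  constructor
  · tauto
  · rintro (rfl | ⟨hb, hadj⟩)
    · exact ⟨Or.inr (Or.inl (by tauto)), hd13⟩
    · have := hb1 hadj; constructor <;> tauto

lemma ts_nbr_other (v : V) (h1 : v ≠ u1) (h2 : v ≠ v1) (h3 : v ≠ u2) (h4 : v ≠ v2) :
    (twoSwitch G u1 v1 u2 v2).neighborFinset v = G.neighborFinset v := by
  ext b
  have hb1 : G.Adj v b → v ≠ b := fun h => G.ne_of_adj h
  simp only [mem_neighborFinset]
  simp only [mem_neighborFinset, twoSwitch, fromEdgeSet_adj, Set.mem_union, Set.mem_diff,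
    Set.mem_insert_iff, Set.mem_singleton_iff, mem_edgeSet, Sym2.eq_iff]
  constructor
  · tauto
  · intro hadj; have := hb1 hadj; constructor <;> tauto

omit [Fintype V] in
lemma ts_comm : twoSwitch G u1 v1 u2 v2 = twoSwitch G u2 v2 u1 v1 := by
  unfold twoSwitch
  rw [Set.pair_comm (s(u1,v1)) (s(u2,v2)), show s(u1,u2) = s(u2,u1) from Sym2.eq_swap,
    show s(v1,v2) = s(v2,v1) from Sym2.eq_swap]

omit [Fintype V] in
lemma ts_swap : twoSwitch G u1 v1 u2 v2 = twoSwitch G v1 u1 v2 u2 := by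
  unfold twoSwitch
  rw [show s(u1,v1) = s(v1,u1) from Sym2.eq_swap, show s(u2,v2) = s(v2,u2) from Sym2.eq_swap,
    Set.pair_comm (s(u1,u2)) (s(v1,v2))]

end Aux

/-- two-switch on edges in different components joins the two cycles. -/
theorem stmt_4 {V : Type*} [Fintype V] (G : SimpleGraph V)
    (hdeg : ∀ v : V, G.degree v = 2)
    (u1 v1 u2 v2 : V)
    (h1 : G.Adj u1 v1) (h2 : G.Adj u2 v2)
    (hd12 : u1 ≠ v1) (hd13 : u1 ≠ u2) (hd14 : u1 ≠ v2)
    (hd23 : v1 ≠ u2) (hd24 : v1 ≠ v2) (hd34 : u2 ≠ v2)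
    (hnu : ¬ G.Adj u1 u2) (hnv : ¬ G.Adj v1 v2)
    (hcomp : ¬ G.Reachable u1 u2) :
    (∀ v : V, (twoSwitch G u1 v1 u2 v2).degree v = 2) ∧
    ∀ x y : V, (G.Reachable u1 x ∨ G.Reachable u2 x) →
      (G.Reachable u1 y ∨ G.Reachable u2 y) →
      (twoSwitch G u1 v1 u2 v2).Reachable x y := by
  classical
  set G' := twoSwitch G u1 v1 u2 v2 with hG'
  set K := G.deleteEdges {s(u1,v1), s(u2,v2)} with hK
  -- basic memberships
  have hv1mem : v1 ∈ G.neighborFinset u1 := (mem_neighborFinset G u1 v1).mpr h1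
  have hu1mem : u1 ∈ G.neighborFinset v1 := (mem_neighborFinset G v1 u1).mpr h1.symm
  have hv2mem : v2 ∈ G.neighborFinset u2 := (mem_neighborFinset G u2 v2).mpr h2
  have hu2mem : u2 ∈ G.neighborFinset v2 := (mem_neighborFinset G v2 u2).mpr h2.symm
  have hGcard : ∀ v, (G.neighborFinset v).card = 2 := by
    intro v; rw [card_neighborFinset_eq_degree]; exact hdeg v
  -- rewriting the deleted edge set in the three symmetric forms
  have hset1 : ({s(u1,v1), s(u2,v2)} : Set (Sym2 V)) = {s(u2,v2), s(u1,v1)} :=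
    Set.pair_comm _ _
  have hset2 : ({s(u1,v1), s(u2,v2)} : Set (Sym2 V)) = {s(v1,u1), s(v2,u2)} := by
    rw [show s(u1,v1) = s(v1,u1) from Sym2.eq_swap, show s(u2,v2) = s(v2,u2) from Sym2.eq_swap]
  -- degrees in K
  have hKu1 : K.neighborFinset u1 = (G.neighborFinset u1).erase v1 := by
    exact delK_nbr_u1 G u1 v1 u2 v2 hd13 hd14
  have hKu2 : K.neighborFinset u2 = (G.neighborFinset u2).erase v2 := by
    convert delK_nbr_u1 G u2 v2 u1 v1 hd13.symm hd23.symm using 2; rw [hK, hset1]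
  have hKdeg_u1 : K.degree u1 = 1 := by
    rw [← card_neighborFinset_eq_degree, hKu1, Finset.card_erase_of_mem hv1mem, hGcard]
  have hKdeg_u2 : K.degree u2 = 1 := by
    rw [← card_neighborFinset_eq_degree, hKu2, Finset.card_erase_of_mem hv2mem, hGcard]
  have hKdeg_other : ∀ v, v ≠ u1 → v ≠ v1 → v ≠ u2 → v ≠ v2 → K.degree v = 2 := by
    intro v h1' h2' h3' h4'
    rw [← card_neighborFinset_eq_degree]
    rw [delK_nbr_other G u1 v1 u2 v2 v h1' h2' h3' h4',
      hGcard]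
  have hKleG : K ≤ G := by rw [hK]; exact deleteEdges_le _
  -- reachability facts about the other component
  have hru1v2 : ¬ G.Reachable u1 v2 := fun h => hcomp (h.trans h2.symm.reachable)
  have hru2v1 : ¬ G.Reachable u2 v1 := fun h => hcomp ((h1.reachable.trans h.symm).symm).symm
  -- K connects u1 to v1
  have huv1 : K.Reachable u1 v1 := by
    obtain ⟨b, hbne, hreach, hodd⟩ := parity_lemma K u1 (by convert odd_one <;> convert hKdeg_u1)
    have hbG : G.Reachable u1 b := hreach.mono hKleG
    have hb2 : b ≠ u2 := fun h => hcomp (h ▸ hbG)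
    have hb3 : b ≠ v2 := fun h => hru1v2 (h ▸ hbG)
    by_cases hb1 : b = v1
    · exact hb1 ▸ hreach
    · exfalso
      have hodd' : Odd (K.degree b) := by convert hodd
      rw [hKdeg_other b hbne hb1 hb2 hb3] at hodd'
      exact absurd hodd' (by decide)
  -- K connects u2 to v2
  have huv2 : K.Reachable u2 v2 := by
    obtain ⟨b, hbne, hreach, hodd⟩ := parity_lemma K u2 (by convert odd_one <;> convert hKdeg_u2)
    have hbG : G.Reachable u2 b := hreach.mono hKleG
    have hb1 : b ≠ u1 := fun h => hcomp ((h ▸ hbG).symm)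
    have hb2 : b ≠ v1 := fun h => hru2v1 (h ▸ hbG)
    by_cases hb3 : b = v2
    · exact hb3 ▸ hreach
    · exfalso
      have hodd' : Odd (K.degree b) := by convert hodd
      rw [hKdeg_other b hb1 hb2 hbne hb3] at hodd'
      exact absurd hodd' (by decide)
  -- edge replacement lemmas
  have edgeK1 : ∀ p q, G.Adj p q → G.Reachable u1 p → K.Reachable p q := by
    intro p q h hp
    by_cases hc1 : s(p,q) = s(u1,v1)
    · rcases Sym2.eq_iff.mp hc1 with ⟨rfl, rfl⟩ | ⟨rfl, rfl⟩
      · exact huv1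
      · exact huv1.symm
    by_cases hc2 : s(p,q) = s(u2,v2)
    · exfalso
      rcases Sym2.eq_iff.mp hc2 with ⟨rfl, rfl⟩ | ⟨rfl, rfl⟩
      · exact hcomp hp
      · exact hru1v2 hp
    · exact (deleteEdges_adj.mpr ⟨h, by simp [Set.mem_insert_iff, hc1, hc2]⟩).reachable
  have edgeK2 : ∀ p q, G.Adj p q → G.Reachable u2 p → K.Reachable p q := by
    intro p q h hp
    by_cases hc1 : s(p,q) = s(u1,v1)
    · exfalso
      rcases Sym2.eq_iff.mp hc1 with ⟨rfl, rfl⟩ | ⟨rfl, rfl⟩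
      · exact hcomp hp.symm
      · exact hru2v1 hp
    by_cases hc2 : s(p,q) = s(u2,v2)
    · rcases Sym2.eq_iff.mp hc2 with ⟨rfl, rfl⟩ | ⟨rfl, rfl⟩
      · exact huv2
      · exact huv2.symm
    · exact (deleteEdges_adj.mpr ⟨h, by simp [Set.mem_insert_iff, hc1, hc2]⟩).reachable
  -- walks in G from the component of u1 (resp. u2) transfer to K
  have walk1 : ∀ p x (w : G.Walk p x), G.Reachable u1 p → K.Reachable p x := by
    intro p x w
    induction w with
    | nil => exact fun _ => Reachable.refl _
    | cons h w ih => exact fun hp => (edgeK1 _ _ h hp).trans (ih (hp.trans h.reachable))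
  have walk2 : ∀ p x (w : G.Walk p x), G.Reachable u2 p → K.Reachable p x := by
    intro p x w
    induction w with
    | nil => exact fun _ => Reachable.refl _
    | cons h w ih => exact fun hp => (edgeK2 _ _ h hp).trans (ih (hp.trans h.reachable))
  have reach1 : ∀ x, G.Reachable u1 x → K.Reachable u1 x := by
    intro x hx
    obtain ⟨w⟩ := hx
    exact walk1 u1 x w (Reachable.refl u1)
  have reach2 : ∀ x, G.Reachable u2 x → K.Reachable u2 x := by
    intro x hx
    obtain ⟨w⟩ := hx
    exact walk2 u2 x w (Reachable.refl u2)
  -- K ≤ G'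
  have hKleG' : K ≤ G' := by
    intro a b h
    rw [hK] at h
    rw [hG']
    have := deleteEdges_adj.mp h
    exact (fromEdgeSet_adj _).mpr ⟨Or.inl ⟨(mem_edgeSet G).mpr this.1, this.2⟩, G.ne_of_adj this.1⟩
  have hadj12 : G'.Adj u1 u2 := by
    rw [hG']
    exact (fromEdgeSet_adj _).mpr ⟨Or.inr (Set.mem_insert _ _), hd13⟩
  constructor
  · -- degrees in G'
    intro v
    by_cases hv1' : v = u1
    · rw [hv1']
      rw [← card_neighborFinset_eq_degree, hG', ts_nbr_u1 G u1 v1 u2 v2 hd12 hd13 hd14 hnu,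
        Finset.card_insert_of_notMem (by
          simp only [Finset.mem_erase, mem_neighborFinset]
          exact fun h => hnu h.2),
        Finset.card_erase_of_mem hv1mem, hGcard]
    by_cases hv2' : v = v1
    · rw [hv2']
      rw [← card_neighborFinset_eq_degree, hG', ts_swap,
        ts_nbr_u1 G v1 u1 v2 u2 hd12.symm hd24 hd23 hnv,
        Finset.card_insert_of_notMem (by
          simp only [Finset.mem_erase, mem_neighborFinset]
          exact fun h => hnv h.2),
        Finset.card_erase_of_mem hu1mem, hGcard]
    by_cases hv3' : v = u2
    · rw [hv3']
      rw [← card_neighborFinset_eq_degree, hG', ts_comm,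
        ts_nbr_u1 G u2 v2 u1 v1 hd34 hd13.symm hd23.symm (fun h => hnu h.symm),
        Finset.card_insert_of_notMem (by
          simp only [Finset.mem_erase, mem_neighborFinset]
          exact fun h => hnu h.2.symm),
        Finset.card_erase_of_mem hv2mem, hGcard]
    by_cases hv4' : v = v2
    · rw [hv4']
      rw [← card_neighborFinset_eq_degree, hG', ts_comm, ts_swap,
        ts_nbr_u1 G v2 u2 v1 u1 hd34.symm hd24.symm hd14.symm (fun h => hnv h.symm),
        Finset.card_insert_of_notMem (by
          simp only [Finset.mem_erase, mem_neighborFinset]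
          exact fun h => hnv h.2.symm),
        Finset.card_erase_of_mem hu2mem, hGcard]
    · rw [← card_neighborFinset_eq_degree, hG',
        ts_nbr_other G u1 v1 u2 v2 v hv1' hv2' hv3' hv4', hGcard]
  · -- reachability in G'
    have key : ∀ x, (G.Reachable u1 x ∨ G.Reachable u2 x) → G'.Reachable u1 x := by
      rintro x (hx | hx)
      · exact (reach1 x hx).mono hKleG'
      · exact hadj12.reachable.trans ((reach2 x hx).mono hKleG')
    intro x y hx hy
    exact (key x hx).symm.trans (key y hy)
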